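/- (SOLS rule for sparse overlapping group lasso.) Consider min_β ½‖y − Xβ‖₂² + λ‖β‖₁ + λ Σ_{g∈G}√(n_g)‖β_g‖₂ viewed as an overlapping group lasso with the singleton groups {j} added to G. For a group g with |g| ≥ 2 and θ* = (y − Xβ*(λ₀))/λ₀, if √( Σ_{j∈g} (max(|x_jᵀθ*| − 1, 0))² ) < √(n_g) − ‖X_g‖_F‖y‖₂·(1/λ − 1/λ₀) with 0 < λ < λ₀, then β*_g(λ) = 0, where β*(λ) is any optimal solution at λ (with λ₁ = λ₂ = λ). -/

import Mathlib

/-- The sparse overlapping group lasso objective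
½‖y − Xβ‖² + λ‖β‖₁ + λ Σ_g √(n_g)‖β_g‖₂ (with λ₁ = λ₂ = λ). -/
noncomputable def sogLassoObj {N J : ℕ} (X : Matrix (Fin N) (Fin J) ℝ) (y : Fin N → ℝ)
    (G : Finset (Finset (Fin J))) (lam : ℝ) (β : Fin J → ℝ) : ℝ :=
  (1 / 2) * (∑ i, (y i - X.mulVec β i) ^ 2)
    + lam * (∑ j, |β j|)
    + lam * ∑ h ∈ G, Real.sqrt (h.card : ℝ) * Real.sqrt (∑ j ∈ h, β j ^ 2)

private lemma eps_le {a b : ℝ} (h : ∀ ε : ℝ, 0 < ε → a ≤ b + ε) : a ≤ b := by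
  by_contra hc
  push_neg at hc
  have := h ((a - b) / 2) (by linarith)
  linarith

/-- The penalty Ω(β) = ‖β‖₁ + Σ_h √n_h ‖β_h‖. -/
noncomputable def sogOm {J : ℕ} (G : Finset (Finset (Fin J))) (β : Fin J → ℝ) : ℝ :=
  (∑ j, |β j|) + ∑ h ∈ G, Real.sqrt (h.card : ℝ) * Real.sqrt (∑ j ∈ h, β j ^ 2)

private lemma obj_eq {N J : ℕ} (X : Matrix (Fin N) (Fin J) ℝ) (y : Fin N → ℝ)
    (G : Finset (Finset (Fin J))) (lam : ℝ) (β : Fin J → ℝ) :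
    sogLassoObj X y G lam β
      = (1 / 2) * (∑ i, (y i - X.mulVec β i) ^ 2) + lam * sogOm G β := by
  simp only [sogLassoObj, sogOm]; ring

private lemma sogOm_nonneg {J : ℕ} (G : Finset (Finset (Fin J))) (β : Fin J → ℝ) :
    0 ≤ sogOm G β := by
  apply add_nonneg
  · exact Finset.sum_nonneg fun j _ => abs_nonneg _
  · exact Finset.sum_nonneg fun h _ => mul_nonneg (Real.sqrt_nonneg _) (Real.sqrt_nonneg _)

private lemma sqrt_sum_sq_mono' {ι : Type*} (s : Finset ι) (f g : ι → ℝ)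
    (h : ∀ i ∈ s, |f i| ≤ |g i|) :
    Real.sqrt (∑ i ∈ s, f i ^ 2) ≤ Real.sqrt (∑ i ∈ s, g i ^ 2) := by
  apply Real.sqrt_le_sqrt
  apply Finset.sum_le_sum
  intro i hi
  have h1 := h i hi
  have h2 := abs_nonneg (f i)
  calc f i ^ 2 = |f i| ^ 2 := (sq_abs _).symm
    _ ≤ |g i| ^ 2 := by nlinarith
    _ = g i ^ 2 := sq_abs _

private lemma sqrt_sum_sq_add' {ι : Type*} (s : Finset ι) (f g : ι → ℝ) :
    Real.sqrt (∑ i ∈ s, (f i + g i) ^ 2)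
      ≤ Real.sqrt (∑ i ∈ s, f i ^ 2) + Real.sqrt (∑ i ∈ s, g i ^ 2) := by
  have hf : 0 ≤ ∑ i ∈ s, f i ^ 2 := Finset.sum_nonneg fun i _ => sq_nonneg _
  have hg : 0 ≤ ∑ i ∈ s, g i ^ 2 := Finset.sum_nonneg fun i _ => sq_nonneg _
  have hcs := Real.sum_mul_le_sqrt_mul_sqrt s f g
  have key : ∑ i ∈ s, (f i + g i) ^ 2
      ≤ (Real.sqrt (∑ i ∈ s, f i ^ 2) + Real.sqrt (∑ i ∈ s, g i ^ 2)) ^ 2 := by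
    have expand : ∑ i ∈ s, (f i + g i) ^ 2
        = ∑ i ∈ s, f i ^ 2 + 2 * (∑ i ∈ s, f i * g i) + ∑ i ∈ s, g i ^ 2 := by
      rw [Finset.mul_sum, ← Finset.sum_add_distrib, ← Finset.sum_add_distrib]
      apply Finset.sum_congr rfl
      intros; ring
    rw [expand, add_sq, Real.sq_sqrt hf, Real.sq_sqrt hg]
    linarith
  calc Real.sqrt (∑ i ∈ s, (f i + g i) ^ 2)
      ≤ Real.sqrt ((Real.sqrt (∑ i ∈ s, f i ^ 2) + Real.sqrt (∑ i ∈ s, g i ^ 2)) ^ 2) :=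
        Real.sqrt_le_sqrt key
    _ = _ := Real.sqrt_sq (by positivity)

private lemma sqrt_sum_sq_smul' {ι : Type*} (s : Finset ι) (c : ℝ) (f : ι → ℝ) :
    Real.sqrt (∑ i ∈ s, (c * f i) ^ 2) = |c| * Real.sqrt (∑ i ∈ s, f i ^ 2) := by
  have h : ∑ i ∈ s, (c * f i) ^ 2 = c ^ 2 * ∑ i ∈ s, f i ^ 2 := by
    rw [Finset.mul_sum]
    apply Finset.sum_congr rfl
    intros; ring
  rw [h, Real.sqrt_mul (sq_nonneg c), Real.sqrt_sq_eq_abs]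

private lemma sogOm_convex {J : ℕ} (G : Finset (Finset (Fin J))) (a b : Fin J → ℝ)
    (t : ℝ) (ht0 : 0 ≤ t) (ht1 : t ≤ 1) :
    sogOm G (fun j => (1 - t) * a j + t * b j)
      ≤ (1 - t) * sogOm G a + t * sogOm G b := by
  have h1 : (∑ j, |(1 - t) * a j + t * b j|)
      ≤ (1 - t) * (∑ j, |a j|) + t * (∑ j, |b j|) := by
    rw [Finset.mul_sum, Finset.mul_sum, ← Finset.sum_add_distrib]
    apply Finset.sum_le_sum
    intro j _
    calc |(1 - t) * a j + t * b j| ≤ |(1 - t) * a j| + |t * b j| := abs_add_le _ _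
      _ = (1 - t) * |a j| + t * |b j| := by
          rw [abs_mul, abs_mul, abs_of_nonneg (by linarith : (0:ℝ) ≤ 1 - t),
            abs_of_nonneg ht0]
  have h2 : (∑ h ∈ G, Real.sqrt (h.card : ℝ)
        * Real.sqrt (∑ j ∈ h, ((1 - t) * a j + t * b j) ^ 2))
      ≤ (1 - t) * (∑ h ∈ G, Real.sqrt (h.card : ℝ) * Real.sqrt (∑ j ∈ h, a j ^ 2))
        + t * (∑ h ∈ G, Real.sqrt (h.card : ℝ) * Real.sqrt (∑ j ∈ h, b j ^ 2)) := by
    rw [Finset.mul_sum, Finset.mul_sum, ← Finset.sum_add_distrib]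
    apply Finset.sum_le_sum
    intro h _
    have key : Real.sqrt (∑ j ∈ h, ((1 - t) * a j + t * b j) ^ 2)
        ≤ (1 - t) * Real.sqrt (∑ j ∈ h, a j ^ 2) + t * Real.sqrt (∑ j ∈ h, b j ^ 2) := by
      have := sqrt_sum_sq_add' h (fun j => (1 - t) * a j) (fun j => t * b j)
      rw [sqrt_sum_sq_smul' h (1 - t) a, sqrt_sum_sq_smul' h t b,
        abs_of_nonneg (by linarith : (0:ℝ) ≤ 1 - t), abs_of_nonneg ht0] at this
      exact this
    have hc : (0:ℝ) ≤ Real.sqrt (h.card : ℝ) := Real.sqrt_nonneg _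
    calc Real.sqrt (h.card : ℝ) * Real.sqrt (∑ j ∈ h, ((1 - t) * a j + t * b j) ^ 2)
        ≤ Real.sqrt (h.card : ℝ)
          * ((1 - t) * Real.sqrt (∑ j ∈ h, a j ^ 2)
            + t * Real.sqrt (∑ j ∈ h, b j ^ 2)) := by
          exact mul_le_mul_of_nonneg_left key hc
      _ = (1 - t) * (Real.sqrt (h.card : ℝ) * Real.sqrt (∑ j ∈ h, a j ^ 2))
          + t * (Real.sqrt (h.card : ℝ) * Real.sqrt (∑ j ∈ h, b j ^ 2)) := by ring
  simp only [sogOm]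
  linarith

/-- Variational inequality at an optimum. -/
private lemma var_ineq {N J : ℕ} (X : Matrix (Fin N) (Fin J) ℝ) (y : Fin N → ℝ)
    (G : Finset (Finset (Fin J))) {lam : ℝ} (hlam : 0 < lam) (b : Fin J → ℝ)
    (hopt : ∀ β : Fin J → ℝ, sogLassoObj X y G lam b ≤ sogLassoObj X y G lam β)
    (β : Fin J → ℝ) :
    ∑ i, (y i - X.mulVec b i) * (X.mulVec β i - X.mulVec b i)
      ≤ lam * (sogOm G β - sogOm G b) := by
  set r : Fin N → ℝ := fun i => y i - X.mulVec b i with hr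
  set v : Fin N → ℝ := fun i => X.mulVec β i - X.mulVec b i with hv
  set K : ℝ := ∑ i, v i ^ 2 with hK
  have hKnn : 0 ≤ K := Finset.sum_nonneg fun i _ => sq_nonneg _
  apply eps_le
  intro ε hε
  set t : ℝ := min 1 (ε / (K / 2 + 1)) with htdef
  have ht0 : 0 < t := lt_min one_pos (by positivity)
  have ht1 : t ≤ 1 := min_le_left _ _
  have htK : t * (K / 2) ≤ ε := by
    have h1 : t ≤ ε / (K / 2 + 1) := min_le_right _ _
    have h2 : t * (K / 2 + 1) ≤ ε := by
      rw [← le_div_iff₀ (by positivity)]; exact h1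
    nlinarith
  set βt : Fin J → ℝ := fun j => (1 - t) * b j + t * β j with hβt
  have hmv : ∀ i, X.mulVec βt i = (1 - t) * X.mulVec b i + t * X.mulVec β i := by
    intro i
    simp only [Matrix.mulVec, dotProduct, hβt]
    rw [Finset.mul_sum, Finset.mul_sum, ← Finset.sum_add_distrib]
    apply Finset.sum_congr rfl
    intros; ring
  have hres : ∀ i, y i - X.mulVec βt i = r i - t * v i := by
    intro i; rw [hmv i]; simp only [hr, hv]; ring
  have hq : ∑ i, (y i - X.mulVec βt i) ^ 2
      = ∑ i, r i ^ 2 - 2 * t * (∑ i, r i * v i) + t ^ 2 * K := by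
    have : ∀ i ∈ (Finset.univ : Finset (Fin N)),
        (y i - X.mulVec βt i) ^ 2 = r i ^ 2 - 2 * t * (r i * v i) + t ^ 2 * v i ^ 2 := by
      intro i _; rw [hres i]; ring
    rw [Finset.sum_congr rfl this, Finset.sum_add_distrib, Finset.sum_sub_distrib,
      ← Finset.mul_sum, ← Finset.mul_sum]
  have hconv := sogOm_convex G b β t ht0.le ht1
  have hto := hopt βt
  rw [obj_eq, obj_eq] at hto
  have hOmle : lam * sogOm G βt ≤ lam * ((1 - t) * sogOm G b + t * sogOm G β) :=
    mul_le_mul_of_nonneg_left hconv hlam.le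
  have hstep : t * (∑ i, r i * v i) ≤ t * (t * (K / 2) + lam * (sogOm G β - sogOm G b)) := by
    have hrr : ∑ i, (y i - X.mulVec b i) ^ 2 = ∑ i, r i ^ 2 := by
      apply Finset.sum_congr rfl; intros; rfl
    rw [hq] at hto
    rw [hrr] at hto
    nlinarith [hto, hOmle]
  have := le_of_mul_le_mul_left (by linarith [hstep] : t * (∑ i, r i * v i)
      ≤ t * (t * (K / 2) + lam * (sogOm G β - sogOm G b))) ht0
  calc ∑ i, (y i - X.mulVec b i) * (X.mulVec β i - X.mulVec b i)
      = ∑ i, r i * v i := by apply Finset.sum_congr rfl; intros; rfl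
    _ ≤ t * (K / 2) + lam * (sogOm G β - sogOm G b) := this
    _ ≤ lam * (sogOm G β - sogOm G b) + ε := by linarith

private lemma abs_sum_mul_le {ι : Type*} (s : Finset ι) (f g : ι → ℝ) :
    |∑ i ∈ s, f i * g i| ≤ Real.sqrt (∑ i ∈ s, f i ^ 2) * Real.sqrt (∑ i ∈ s, g i ^ 2) := by
  have h1 := Real.sum_mul_le_sqrt_mul_sqrt s f g
  have h2 := Real.sum_mul_le_sqrt_mul_sqrt s (fun i => -f i) g
  simp only [neg_mul, Finset.sum_neg_distrib, neg_sq] at h2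
  rw [abs_le]
  constructor <;> linarith

/-- Residual at the optimum is no larger than ‖y‖. -/
private lemma resid_le {N J : ℕ} (X : Matrix (Fin N) (Fin J) ℝ) (y : Fin N → ℝ)
    (G : Finset (Finset (Fin J))) {lam : ℝ} (hlam : 0 < lam) (b : Fin J → ℝ)
    (hopt : ∀ β : Fin J → ℝ, sogLassoObj X y G lam b ≤ sogLassoObj X y G lam β) :
    ∑ i, (y i - X.mulVec b i) ^ 2 ≤ ∑ i, y i ^ 2 := by
  have h := hopt 0
  have h0 : sogLassoObj X y G lam 0 = (1 / 2) * (∑ i, y i ^ 2) := by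
    simp [sogLassoObj, Matrix.mulVec_zero]
  rw [h0, obj_eq] at h
  have := sogOm_nonneg G b
  nlinarith

/-- Dual drift bound: ‖θ₁ − θ₀‖ ≤ ‖y‖(1/λ − 1/λ₀). -/
private lemma dual_drift {N J : ℕ} (X : Matrix (Fin N) (Fin J) ℝ) (y : Fin N → ℝ)
    (G : Finset (Finset (Fin J))) {lam lam0 : ℝ} (hlam : 0 < lam) (hll : lam < lam0)
    (β0 β1 : Fin J → ℝ)
    (hopt0 : ∀ β : Fin J → ℝ, sogLassoObj X y G lam0 β0 ≤ sogLassoObj X y G lam0 β)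
    (hopt1 : ∀ β : Fin J → ℝ, sogLassoObj X y G lam β1 ≤ sogLassoObj X y G lam β)
    (θ0 θ1 : Fin N → ℝ) (hθ0 : ∀ i, θ0 i = (y i - X.mulVec β0 i) / lam0)
    (hθ1 : ∀ i, θ1 i = (y i - X.mulVec β1 i) / lam) :
    Real.sqrt (∑ i, (θ1 i - θ0 i) ^ 2)
      ≤ Real.sqrt (∑ i, y i ^ 2) * (1 / lam - 1 / lam0) := by
  have hlam0 : 0 < lam0 := hlam.trans hll
  have hr1 : ∀ i, y i - X.mulVec β1 i = lam * θ1 i := by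
    intro i; rw [hθ1 i]; field_simp
  have hr0 : ∀ i, y i - X.mulVec β0 i = lam0 * θ0 i := by
    intro i; rw [hθ0 i]; field_simp
  have hv : ∀ i, X.mulVec β0 i - X.mulVec β1 i = lam * θ1 i - lam0 * θ0 i := by
    intro i; have h1 := hr1 i; have h0 := hr0 i; linarith
  have VI1 := var_ineq X y G hlam β1 hopt1 β0
  have VI0 := var_ineq X y G hlam0 β0 hopt0 β1
  set D : ℝ := sogOm G β0 - sogOm G β1 with hD
  have e1 : ∑ i, (y i - X.mulVec β1 i) * (X.mulVec β0 i - X.mulVec β1 i)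
      = lam * ∑ i, θ1 i * (lam * θ1 i - lam0 * θ0 i) := by
    rw [Finset.mul_sum]
    apply Finset.sum_congr rfl
    intro i _
    rw [hr1 i, hv i]; ring
  have e0 : ∑ i, (y i - X.mulVec β0 i) * (X.mulVec β1 i - X.mulVec β0 i)
      = lam0 * ∑ i, θ0 i * (lam0 * θ0 i - lam * θ1 i) := by
    rw [Finset.mul_sum]
    apply Finset.sum_congr rfl
    intro i _
    have h := hv i
    rw [hr0 i, show X.mulVec β1 i - X.mulVec β0 i = lam0 * θ0 i - lam * θ1 i by linarith]
    ring
  rw [e1] at VI1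
  rw [e0] at VI0
  have A1 : ∑ i, θ1 i * (lam * θ1 i - lam0 * θ0 i) ≤ D :=
    le_of_mul_le_mul_left VI1 hlam
  have A0 : ∑ i, θ0 i * (lam0 * θ0 i - lam * θ1 i) ≤ -D := by
    have := le_of_mul_le_mul_left VI0 hlam0
    linarith
  have key : lam * (∑ i, (θ1 i - θ0 i) ^ 2)
      ≤ (lam0 - lam) * ∑ i, (θ1 i - θ0 i) * θ0 i := by
    have hsum : ∑ i, θ1 i * (lam * θ1 i - lam0 * θ0 i)
          + ∑ i, θ0 i * (lam0 * θ0 i - lam * θ1 i)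
        = lam * (∑ i, (θ1 i - θ0 i) ^ 2)
          - (lam0 - lam) * ∑ i, (θ1 i - θ0 i) * θ0 i := by
      rw [Finset.mul_sum, Finset.mul_sum, ← Finset.sum_add_distrib, ← Finset.sum_sub_distrib]
      apply Finset.sum_congr rfl
      intro i _; ring
    have h2 : ∑ i, θ1 i * (lam * θ1 i - lam0 * θ0 i)
        + ∑ i, θ0 i * (lam0 * θ0 i - lam * θ1 i) ≤ 0 := by linarith
    linarith [hsum ▸ h2]
  set U : ℝ := Real.sqrt (∑ i, (θ1 i - θ0 i) ^ 2) with hU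
  have hUnn : 0 ≤ U := Real.sqrt_nonneg _
  have hU2 : ∑ i, (θ1 i - θ0 i) ^ 2 = U ^ 2 :=
    (Real.sq_sqrt (Finset.sum_nonneg fun i _ => sq_nonneg _)).symm
  -- bound √∑θ0² ≤ (1/λ₀)‖y‖
  have hT0 : Real.sqrt (∑ i, θ0 i ^ 2) ≤ (1 / lam0) * Real.sqrt (∑ i, y i ^ 2) := by
    have h1 : ∑ i, θ0 i ^ 2 = ∑ i, ((1 / lam0) * (y i - X.mulVec β0 i)) ^ 2 := by
      apply Finset.sum_congr rfl
      intro i _; rw [hθ0 i]; ring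
    rw [h1, sqrt_sum_sq_smul' _ (1 / lam0) _, abs_of_pos (by positivity)]
    have h2 := resid_le X y G hlam0 β0 hopt0
    have h3 := Real.sqrt_le_sqrt h2
    have : (0:ℝ) ≤ 1 / lam0 := by positivity
    exact mul_le_mul_of_nonneg_left h3 this
  have hcs : ∑ i, (θ1 i - θ0 i) * θ0 i ≤ U * ((1 / lam0) * Real.sqrt (∑ i, y i ^ 2)) := by
    calc ∑ i, (θ1 i - θ0 i) * θ0 i
        ≤ Real.sqrt (∑ i, (θ1 i - θ0 i) ^ 2) * Real.sqrt (∑ i, θ0 i ^ 2) :=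
          Real.sum_mul_le_sqrt_mul_sqrt _ _ _
      _ ≤ U * ((1 / lam0) * Real.sqrt (∑ i, y i ^ 2)) :=
          mul_le_mul_of_nonneg_left hT0 hUnn
  have hmain : lam * U ^ 2 ≤ (lam0 - lam) * (U * ((1 / lam0) * Real.sqrt (∑ i, y i ^ 2))) := by
    rw [← hU2]
    calc lam * (∑ i, (θ1 i - θ0 i) ^ 2)
        ≤ (lam0 - lam) * ∑ i, (θ1 i - θ0 i) * θ0 i := key
      _ ≤ (lam0 - lam) * (U * ((1 / lam0) * Real.sqrt (∑ i, y i ^ 2))) :=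
          mul_le_mul_of_nonneg_left hcs (by linarith)
  rcases eq_or_lt_of_le hUnn with h0 | hpos
  · rw [← h0]
    have hinv : (0:ℝ) ≤ 1 / lam - 1 / lam0 := by
      have := one_div_le_one_div_of_le hlam hll.le
      linarith
    positivity
  · have hexp : lam * U * (Real.sqrt (∑ i, y i ^ 2) * (1 / lam - 1 / lam0))
        = (lam0 - lam) * (U * ((1 / lam0) * Real.sqrt (∑ i, y i ^ 2))) := by
      field_simp
    have : lam * U * U ≤ lam * U * (Real.sqrt (∑ i, y i ^ 2) * (1 / lam - 1 / lam0)) := by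
      rw [hexp]
      nlinarith [hmain]
    exact le_of_mul_le_mul_left this (by positivity)

/-- SOLS rule for sparse overlapping group lasso: the soft-thresholded screening
condition √(Σ_{j∈g} (max(|x_jᵀθ*| − 1, 0))²) < √(n_g) − ‖X_g‖_F‖y‖₂(1/λ − 1/λ₀)
implies β*_g(λ) = 0. -/
theorem sols_screening {N J : ℕ} (X : Matrix (Fin N) (Fin J) ℝ) (y : Fin N → ℝ)
    (lam lam0 : ℝ) (hlam : 0 < lam) (hll : lam < lam0)
    (G : Finset (Finset (Fin J))) (g : Finset (Fin J)) (hg : g ∈ G) (hcard : 2 ≤ g.card)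
    (β0 : Fin J → ℝ)
    (hopt0 : ∀ β : Fin J → ℝ, sogLassoObj X y G lam0 β0 ≤ sogLassoObj X y G lam0 β)
    (θstar : Fin N → ℝ) (hθ : ∀ i, θstar i = (y i - X.mulVec β0 i) / lam0)
    (hscreen : Real.sqrt (∑ j ∈ g, (max (|∑ i, X i j * θstar i| - 1) 0) ^ 2)
      < Real.sqrt (g.card : ℝ)
        - Real.sqrt (∑ j ∈ g, ∑ i, X i j ^ 2) * Real.sqrt (∑ i, y i ^ 2)
          * (1 / lam - 1 / lam0)) :
    ∀ β1 : Fin J → ℝ,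
      (∀ β : Fin J → ℝ, sogLassoObj X y G lam β1 ≤ sogLassoObj X y G lam β) →
      ∀ j ∈ g, β1 j = 0 := by
  intro β1 hopt1 j hj
  by_contra hne
  have hlam0 : 0 < lam0 := hlam.trans hll
  -- dual points
  have hθ1 : ∀ i, (fun i => (y i - X.mulVec β1 i) / lam) i
      = (y i - X.mulVec β1 i) / lam := fun i => rfl
  set θ1 : Fin N → ℝ := fun i => (y i - X.mulVec β1 i) / lam with hθ1def
  have hdrift := dual_drift X y G hlam hll β0 β1 hopt0 hopt1 θstar θ1 hθ (fun i => rfl)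
  have hr1θ : ∀ i, y i - X.mulVec β1 i = lam * θ1 i := by
    intro i; simp only [hθ1def]; field_simp
  set u : Fin N → ℝ := fun i => θ1 i - θstar i with hudef
  set U : ℝ := Real.sqrt (∑ i, u i ^ 2) with hUdef
  have hUnn : 0 ≤ U := Real.sqrt_nonneg _
  have hUle : U ≤ Real.sqrt (∑ i, y i ^ 2) * (1 / lam - 1 / lam0) := hdrift
  -- norms over the group g
  set nrm : ℝ := Real.sqrt (∑ j' ∈ g, β1 j' ^ 2) with hnrmdef
  have hnrm : 0 < nrm := Real.sqrt_pos.mpr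
    (Finset.sum_pos' (fun _ _ => sq_nonneg _) ⟨j, hj, by positivity⟩)
  set L : ℝ := ∑ j' ∈ g, |β1 j'| with hLdef
  set cg : ℝ := Real.sqrt (g.card : ℝ) with hcgdef
  -- the candidate with group g zeroed out
  set βt : Fin J → ℝ := fun j' => if j' ∈ g then 0 else β1 j' with hβtdef
  have VIg := var_ineq X y G hlam β1 hopt1 βt
  -- difference of predictions
  have hw : ∀ i, X.mulVec βt i - X.mulVec β1 i = -(∑ j' ∈ g, X i j' * β1 j') := by
    intro i
    simp only [Matrix.mulVec, dotProduct, hβtdef]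
    rw [← Finset.sum_sub_distrib]
    rw [Finset.sum_congr rfl (fun j' _ => show
        X i j' * (if j' ∈ g then 0 else β1 j') - X i j' * β1 j'
          = if j' ∈ g then -(X i j' * β1 j') else 0 by split <;> ring)]
    rw [Finset.sum_ite_mem, Finset.univ_inter, Finset.sum_neg_distrib]
  -- ℓ1 part of Ω(βt)
  have hOmL1 : ∑ j', |βt j'| = (∑ j', |β1 j'|) - L := by
    simp only [hβtdef, hLdef]
    rw [Finset.sum_congr rfl (fun j' _ => show |if j' ∈ g then (0:ℝ) else β1 j'|
        = |β1 j'| - (if j' ∈ g then |β1 j'| else 0) by split <;> simp),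
      Finset.sum_sub_distrib, Finset.sum_ite_mem, Finset.univ_inter]
  -- group part of Ω(βt)
  have hOmG : ∑ h ∈ G, Real.sqrt (h.card : ℝ) * Real.sqrt (∑ j' ∈ h, βt j' ^ 2)
      ≤ (∑ h ∈ G, Real.sqrt (h.card : ℝ) * Real.sqrt (∑ j' ∈ h, β1 j' ^ 2))
        - cg * nrm := by
    have hterm : ∀ h ∈ G, 0 ≤ Real.sqrt (h.card : ℝ) * Real.sqrt (∑ j' ∈ h, β1 j' ^ 2)
        - Real.sqrt (h.card : ℝ) * Real.sqrt (∑ j' ∈ h, βt j' ^ 2) := by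
      intro h _
      rw [sub_nonneg]
      apply mul_le_mul_of_nonneg_left _ (Real.sqrt_nonneg _)
      apply sqrt_sum_sq_mono'
      intro j' _
      simp only [hβtdef]
      split <;> simp
    have hgzero : Real.sqrt (∑ j' ∈ g, βt j' ^ 2) = 0 := by
      rw [show (∑ j' ∈ g, βt j' ^ 2) = 0 by
        apply Finset.sum_eq_zero
        intro j' hj'
        simp [hβtdef, hj']]
      exact Real.sqrt_zero
    have hsingle := Finset.single_le_sum hterm hg
    rw [hgzero, mul_zero, sub_zero] at hsingle
    have hsplit : ∑ h ∈ G, (Real.sqrt (h.card : ℝ) * Real.sqrt (∑ j' ∈ h, β1 j' ^ 2)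
          - Real.sqrt (h.card : ℝ) * Real.sqrt (∑ j' ∈ h, βt j' ^ 2))
        = (∑ h ∈ G, Real.sqrt (h.card : ℝ) * Real.sqrt (∑ j' ∈ h, β1 j' ^ 2))
          - ∑ h ∈ G, Real.sqrt (h.card : ℝ) * Real.sqrt (∑ j' ∈ h, βt j' ^ 2) :=
      Finset.sum_sub_distrib _ _
    rw [hsplit] at hsingle
    simp only [hcgdef, hnrmdef]
    linarith
  -- lower bound on T
  set T : ℝ := ∑ i, (y i - X.mulVec β1 i) * (∑ j' ∈ g, X i j' * β1 j') with hTdef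
  have hlow : lam * (L + cg * nrm) ≤ T := by
    have hOmdiff : sogOm G βt - sogOm G β1 ≤ -(L + cg * nrm) := by
      simp only [sogOm]
      linarith [hOmL1, hOmG]
    have hlhs : ∑ i, (y i - X.mulVec β1 i) * (X.mulVec βt i - X.mulVec β1 i) = -T := by
      simp only [hTdef]
      rw [← Finset.sum_neg_distrib]
      apply Finset.sum_congr rfl
      intro i _
      rw [hw i]; ring
    rw [hlhs] at VIg
    have := mul_le_mul_of_nonneg_left hOmdiff hlam.le
    have h2 : -T ≤ lam * (-(L + cg * nrm)) := le_trans VIg this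
    nlinarith [h2]
  -- upper bound on T
  set cst : Fin J → ℝ := fun j' => ∑ i, X i j' * θstar i with hcstdef
  set e : Fin J → ℝ := fun j' => ∑ i, X i j' * u i with hedef
  set m : Fin J → ℝ := fun j' => max (|cst j'| - 1) 0 with hmdef
  set xn : Fin J → ℝ := fun j' => Real.sqrt (∑ i, X i j' ^ 2) with hxndef
  have hswap : T = lam * ∑ j' ∈ g, β1 j' * (cst j' + e j') := by
    simp only [hTdef]
    rw [Finset.mul_sum]
    rw [show (∑ i, (y i - X.mulVec β1 i) * ∑ j' ∈ g, X i j' * β1 j')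
        = ∑ i, ∑ j' ∈ g, (y i - X.mulVec β1 i) * (X i j' * β1 j') by
      apply Finset.sum_congr rfl; intro i _; rw [Finset.mul_sum]]
    rw [Finset.sum_comm]
    apply Finset.sum_congr rfl
    intro j' _
    have : ∑ i, (y i - X.mulVec β1 i) * (X i j' * β1 j')
        = β1 j' * ∑ i, (lam * (X i j' * θstar i) + lam * (X i j' * u i)) := by
      rw [Finset.mul_sum]
      apply Finset.sum_congr rfl
      intro i _
      rw [hr1θ i]
      have : θ1 i = θstar i + u i := by simp only [hudef]; ring
      rw [this]; ring
    rw [this, Finset.sum_add_distrib, ← Finset.mul_sum, ← Finset.mul_sum]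
    simp only [hcstdef, hedef]
    ring
  have he : ∀ j', |e j'| ≤ xn j' * U := by
    intro j'
    simpa [hedef, hxndef, hUdef] using abs_sum_mul_le Finset.univ (fun i => X i j') u
  have hjb : ∀ j' ∈ g, β1 j' * (cst j' + e j')
      ≤ |β1 j'| * (m j' + xn j' * U) + |β1 j'| := by
    intro j' hj'
    have h1 : |cst j' + e j'| ≤ (m j' + 1) + xn j' * U := by
      have hmle : |cst j'| ≤ m j' + 1 := by
        have := le_max_left (|cst j'| - 1) 0
        simp only [hmdef]
        linarith
      calc |cst j' + e j'| ≤ |cst j'| + |e j'| := abs_add_le _ _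
        _ ≤ (m j' + 1) + xn j' * U := add_le_add hmle (he j')
    calc β1 j' * (cst j' + e j') ≤ |β1 j' * (cst j' + e j')| := le_abs_self _
      _ = |β1 j'| * |cst j' + e j'| := abs_mul _ _
      _ ≤ |β1 j'| * ((m j' + 1) + xn j' * U) :=
          mul_le_mul_of_nonneg_left h1 (abs_nonneg _)
      _ = |β1 j'| * (m j' + xn j' * U) + |β1 j'| := by ring
  have hcs2 : ∑ j' ∈ g, |β1 j'| * (m j' + xn j' * U)
      ≤ nrm * Real.sqrt (∑ j' ∈ g, (m j' + xn j' * U) ^ 2) := by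
    have h1 := Real.sum_mul_le_sqrt_mul_sqrt g (fun j' => |β1 j'|)
      (fun j' => m j' + xn j' * U)
    have h2 : ∑ j' ∈ g, |β1 j'| ^ 2 = ∑ j' ∈ g, β1 j' ^ 2 := by
      apply Finset.sum_congr rfl; intros; exact sq_abs _
    rw [h2] at h1
    simpa [hnrmdef] using h1
  have htri : Real.sqrt (∑ j' ∈ g, (m j' + xn j' * U) ^ 2)
      ≤ Real.sqrt (∑ j' ∈ g, m j' ^ 2) + U * Real.sqrt (∑ j' ∈ g, xn j' ^ 2) := by
    have h1 := sqrt_sum_sq_add' g m (fun j' => xn j' * U)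
    have h2 : ∑ j' ∈ g, (xn j' * U) ^ 2 = ∑ j' ∈ g, (U * xn j') ^ 2 := by
      apply Finset.sum_congr rfl; intros; ring
    rw [h2, sqrt_sum_sq_smul' g U xn, abs_of_nonneg hUnn] at h1
    exact h1
  have hxn2 : ∑ j' ∈ g, xn j' ^ 2 = ∑ j' ∈ g, ∑ i, X i j' ^ 2 := by
    apply Finset.sum_congr rfl
    intro j' _
    simp only [hxndef]
    exact Real.sq_sqrt (Finset.sum_nonneg fun i _ => sq_nonneg _)
  have hQ : Real.sqrt (∑ j' ∈ g, (m j' + xn j' * U) ^ 2) < cg := by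
    have hFro : (0:ℝ) ≤ Real.sqrt (∑ j' ∈ g, ∑ i, X i j' ^ 2) := Real.sqrt_nonneg _
    have hUF : U * Real.sqrt (∑ j' ∈ g, xn j' ^ 2)
        ≤ Real.sqrt (∑ j' ∈ g, ∑ i, X i j' ^ 2) * Real.sqrt (∑ i, y i ^ 2)
          * (1 / lam - 1 / lam0) := by
      rw [hxn2]
      calc U * Real.sqrt (∑ j' ∈ g, ∑ i, X i j' ^ 2)
          ≤ (Real.sqrt (∑ i, y i ^ 2) * (1 / lam - 1 / lam0))
            * Real.sqrt (∑ j' ∈ g, ∑ i, X i j' ^ 2) :=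
            mul_le_mul_of_nonneg_right hUle hFro
        _ = Real.sqrt (∑ j' ∈ g, ∑ i, X i j' ^ 2) * Real.sqrt (∑ i, y i ^ 2)
            * (1 / lam - 1 / lam0) := by ring
    have hm2 : Real.sqrt (∑ j' ∈ g, m j' ^ 2)
        = Real.sqrt (∑ j' ∈ g, (max (|∑ i, X i j' * θstar i| - 1) 0) ^ 2) := by
      simp only [hmdef, hcstdef]
    calc Real.sqrt (∑ j' ∈ g, (m j' + xn j' * U) ^ 2)
        ≤ Real.sqrt (∑ j' ∈ g, m j' ^ 2) + U * Real.sqrt (∑ j' ∈ g, xn j' ^ 2) := htri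
      _ < cg := by
          rw [hm2]
          simp only [hcgdef]
          linarith [hscreen, hUF]
  have hupper : T < lam * (L + cg * nrm) := by
    have h1 : ∑ j' ∈ g, β1 j' * (cst j' + e j')
        ≤ nrm * Real.sqrt (∑ j' ∈ g, (m j' + xn j' * U) ^ 2) + L := by
      calc ∑ j' ∈ g, β1 j' * (cst j' + e j')
          ≤ ∑ j' ∈ g, (|β1 j'| * (m j' + xn j' * U) + |β1 j'|) :=
            Finset.sum_le_sum hjb
        _ = (∑ j' ∈ g, |β1 j'| * (m j' + xn j' * U)) + L := by
            rw [Finset.sum_add_distrib]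
        _ ≤ nrm * Real.sqrt (∑ j' ∈ g, (m j' + xn j' * U) ^ 2) + L := by
            linarith [hcs2]
    have h2 : nrm * Real.sqrt (∑ j' ∈ g, (m j' + xn j' * U) ^ 2) < nrm * cg :=
      mul_lt_mul_of_pos_left hQ hnrm
    have h3 : ∑ j' ∈ g, β1 j' * (cst j' + e j') < L + cg * nrm := by
      have := mul_comm nrm cg
      linarith
    rw [hswap]
    exact mul_lt_mul_of_pos_left h3 hlam
  linarith
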